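/- Let G be a plane graph in which no 4-cycle is adjacent to a 6-cycle. Then every vertex v of G of degree at least 5 is incident to at most d_G(v)−2 faces of length 3. -/

import Mathlib

open SimpleGraph

universe u

variable {V : Type u}

/-! ### Basic notions: degree, adjacent cycles, good/bad cycles -/

/-- The degree of a vertex, as the cardinality of its neighbour set. -/
noncomputable def gdeg (G : SimpleGraph V) (v : V) : ℕ := Nat.card (G.neighborSet v)

/-- Two closed walks (cycles) share at least one edge. -/
def ShareEdge {G : SimpleGraph V} {a b : V} (c1 : G.Walk a a) (c2 : G.Walk b b) : Prop :=
  ∃ e : Sym2 V, e ∈ c1.edges ∧ e ∈ c2.edges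

/-- In `G`, no cycle of length `k` is adjacent to (shares an edge with) a cycle of length `l`. -/
def NoAdjCycles (G : SimpleGraph V) (k l : ℕ) : Prop :=
  ∀ (a b : V) (c1 : G.Walk a a) (c2 : G.Walk b b),
    c1.IsCycle → c2.IsCycle → c1.length = k → c2.length = l → ¬ ShareEdge c1 c2

/-- A cycle `C` is bad if some vertex of degree at least 4 outside `C`
has at least four neighbours on `C`. -/
def IsBadCycle (G : SimpleGraph V) {a : V} (C : G.Walk a a) : Prop :=
  ∃ w : V, w ∉ C.support ∧ 4 ≤ gdeg G w ∧
    4 ≤ Nat.card {u : V | u ∈ C.support ∧ G.Adj w u}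

/-- A cycle is good if it is not bad. -/
def IsGoodCycle (G : SimpleGraph V) {a : V} (C : G.Walk a a) : Prop := ¬ IsBadCycle G C

/-! ### Combinatorial plane embeddings via rotation systems -/

/-- Reversal of darts, as a permutation. -/
def dartReversal (G : SimpleGraph V) : Equiv.Perm G.Dart where
  toFun := SimpleGraph.Dart.symm
  invFun := SimpleGraph.Dart.symm
  left_inv d := SimpleGraph.Dart.symm_symm d
  right_inv d := SimpleGraph.Dart.symm_symm d

/-- The face-tracing permutation of a rotation system: follow a dart, turn around,
and take the next outgoing dart in the rotation. Its orbits are the faces. -/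
def facePerm {G : SimpleGraph V} (rot : Equiv.Perm G.Dart) : Equiv.Perm G.Dart :=
  (dartReversal G).trans rot

/-- The setoid identifying elements in the same cycle (orbit) of a permutation. -/
def sameCycleSetoid {α : Type*} (f : Equiv.Perm α) : Setoid α :=
  ⟨f.SameCycle, ⟨fun x => Equiv.Perm.SameCycle.refl f x,
    fun h => h.symm, fun h h' => h.trans h'⟩⟩

/-- A (combinatorial) plane embedding of a finite graph `G`: a rotation system
(a permutation of the darts preserving tails and acting with a single cycle on
the darts at each vertex) whose face count satisfies Euler's formula for the plane;
the faces are the orbits of the face-tracing permutation, and isolated vertices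
are accounted for separately. -/
structure PlaneEmbedding [Fintype V] (G : SimpleGraph V) where
  rot : Equiv.Perm G.Dart
  rot_fst : ∀ d : G.Dart, (rot d).fst = d.fst
  rot_cycle : ∀ d d' : G.Dart, d.fst = d'.fst → rot.SameCycle d d'
  euler : (Fintype.card V : ℤ) - (Nat.card G.edgeSet : ℤ)
        + (Nat.card (Quotient (sameCycleSetoid (facePerm rot))) : ℤ)
      = 2 * (Nat.card G.ConnectedComponent : ℤ)
        - (Nat.card {v : V | ∀ w : V, ¬ G.Adj v w} : ℤ)

/-- A graph is planar if it admits a plane embedding. -/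
def IsPlanar [Fintype V] (G : SimpleGraph V) : Prop := Nonempty (PlaneEmbedding G)

namespace PlaneEmbedding

variable [Fintype V] {G : SimpleGraph V} (E : PlaneEmbedding G)

/-- Two darts lie on the same face. -/
def SameFace (d d' : G.Dart) : Prop := (facePerm E.rot).SameCycle d d'

/-- The length of the face containing the dart `d`, i.e. the length of its
boundary closed walk. -/
noncomputable def faceLength (d : G.Dart) : ℕ :=
  Function.minimalPeriod (⇑(facePerm E.rot)) d

/-- The vertex `v` lies on (the boundary of) the face of the dart `d`. -/
def VertexOnFace (v : V) (d : G.Dart) : Prop := ∃ d' : G.Dart, E.SameFace d d' ∧ d'.fst = v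

/-- The faces of the darts `d` and `e` are distinct and share at least one edge. -/
def AdjFaces (d e : G.Dart) : Prop :=
  ¬ E.SameFace d e ∧ ∃ d' : G.Dart, E.SameFace d d' ∧ E.SameFace e d'.symm

/-- The number of faces of length 3 incident with the vertex `v`. -/
noncomputable def numTriFacesAt (v : V) : ℕ :=
  Nat.card {f : Quotient (sameCycleSetoid (facePerm E.rot)) //
    ∃ d : G.Dart, Quotient.mk (sameCycleSetoid (facePerm E.rot)) d = f ∧
      d.fst = v ∧ E.faceLength d = 3}

/-- `s` is a set of darts representing pairwise distinct 3-faces which are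
connected through shared edges: a `T_i`-subgraph with `i = s.card`. -/
def IsTSubgraph (s : Finset G.Dart) : Prop :=
  (∀ d ∈ s, E.faceLength d = 3) ∧
  (∀ d ∈ s, ∀ d' ∈ s, d ≠ d' → ¬ E.SameFace d d') ∧
  (∀ d ∈ s, ∀ d' ∈ s,
    Relation.ReflTransGen (fun x y => x ∈ s ∧ y ∈ s ∧ E.AdjFaces x y) d d')

/-- The vertices of the union of the faces represented by `s`. -/
def TVertices (s : Finset G.Dart) : Set V := {v | ∃ d ∈ s, E.VertexOnFace v d}

/-- The edges of the union of the faces represented by `s`. -/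
def TEdges (s : Finset G.Dart) : Set (Sym2 V) :=
  {e | ∃ d ∈ s, ∃ d' : G.Dart, E.SameFace d d' ∧ d'.edge = e}

/-- The subgraph of `G` formed by the union of the faces represented by `s`. -/
def TGraph (s : Finset G.Dart) : SimpleGraph (E.TVertices s) where
  Adj x y := x ≠ y ∧ s((x : V), (y : V)) ∈ E.TEdges s
  symm := ⟨fun x y h => ⟨h.1.symm, by rw [Sym2.eq_swap]; exact h.2⟩⟩
  loopless := ⟨fun x h => h.1 rfl⟩

/-- The face of the dart `d0` is bounded by the cycle `C`: it has the same length
as `C` and all its boundary edges are edges of `C`. -/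
def FaceBoundedBy (d0 : G.Dart) {a : V} (C : G.Walk a a) : Prop :=
  E.faceLength d0 = C.length ∧ ∀ d' : G.Dart, E.SameFace d0 d' → d'.edge ∈ C.edges

/-- The cycle `C` is separating in the embedding `E`: there are two vertices not on
`C` (witnessed by darts at them) whose faces cannot be connected to each other by
moving along faces and crossing edges not on `C`; equivalently, the interior and the
exterior of `C` both contain a vertex of `G`. -/
def IsSeparating {a : V} (C : G.Walk a a) : Prop :=
  ∃ d e : G.Dart, d.fst ∉ C.support ∧ e.fst ∉ C.support ∧
    ¬ Relation.ReflTransGen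
        (fun x y => E.SameFace x y ∨ (y = x.symm ∧ x.edge ∉ C.edges)) d e

end PlaneEmbedding

/-- The wheel `W_4`: a 4-cycle `1 2 3 4` together with a centre `0` joined to all
four cycle vertices. -/
def wheelW4 : SimpleGraph (Fin 5) :=
  SimpleGraph.fromRel (fun a b =>
    (a, b) ∈ ({(0,1),(0,2),(0,3),(0,4),(1,2),(2,3),(3,4),(4,1)} : Set (Fin 5 × Fin 5)))

/-! ### DP-colouring -/

/-- A matching assignment for the graph `G` and list assignment `L`: for every edge
`uv` a (partial) matching between `{u} × L u` and `{v} × L v`. -/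
structure MatchingAssignment (G : SimpleGraph V) (L : V → Finset ℕ) where
  rel : ∀ ⦃u v : V⦄, G.Adj u v → ℕ → ℕ → Prop
  mem_left : ∀ ⦃u v : V⦄ (h : G.Adj u v) ⦃a b : ℕ⦄, rel h a b → a ∈ L u
  mem_right : ∀ ⦃u v : V⦄ (h : G.Adj u v) ⦃a b : ℕ⦄, rel h a b → b ∈ L v
  symm : ∀ ⦃u v : V⦄ (h : G.Adj u v) (a b : ℕ), rel h a b ↔ rel h.symm b a
  right_unique : ∀ ⦃u v : V⦄ (h : G.Adj u v) ⦃a b b' : ℕ⦄, rel h a b → rel h a b' → b = b'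
  left_unique : ∀ ⦃u v : V⦄ (h : G.Adj u v) ⦃a a' b : ℕ⦄, rel h a b → rel h a' b → a = a'

/-- The cover graph `H_L`: vertices are pairs `(v, c)` with `c ∈ L v`; each set
`{v} × L v` is a clique, and between `{u} × L u` and `{v} × L v` (for `uv ∈ E(G)`)
there are exactly the edges of the matching `M_{uv}`. -/
def Cover {G : SimpleGraph V} {L : V → Finset ℕ} (M : MatchingAssignment G L) :
    SimpleGraph {p : V × ℕ // p.2 ∈ L p.1} where
  Adj x y := x ≠ y ∧
    ((x : V × ℕ).1 = (y : V × ℕ).1 ∨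
      ∃ h : G.Adj (x : V × ℕ).1 (y : V × ℕ).1, M.rel h (x : V × ℕ).2 (y : V × ℕ).2)
  symm := by
    constructor
    rintro x y ⟨hxy, h | ⟨hadj, hrel⟩⟩
    · exact ⟨hxy.symm, Or.inl h.symm⟩
    · exact ⟨hxy.symm, Or.inr ⟨hadj.symm, (M.symm hadj _ _).1 hrel⟩⟩
  loopless := ⟨fun x h => h.1 rfl⟩

/-- A set of vertices of the cover graph is independent. -/
def CoverIndep {G : SimpleGraph V} {L : V → Finset ℕ} (M : MatchingAssignment G L)
    (s : Set {p : V × ℕ // p.2 ∈ L p.1}) : Prop :=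
  ∀ ⦃x⦄, x ∈ s → ∀ ⦃y⦄, y ∈ s → ¬ (Cover M).Adj x y

/-- `G` has an `M_L`-colouring: an independent set of size `|V(G)|` in the cover graph. -/
def HasMLColoring [Fintype V] {G : SimpleGraph V} {L : V → Finset ℕ}
    (M : MatchingAssignment G L) : Prop :=
  ∃ s : Set {p : V × ℕ // p.2 ∈ L p.1}, CoverIndep M s ∧ Nat.card s = Fintype.card V

/-- `G` is DP-`k`-colourable. -/
def DPColorable [Fintype V] (G : SimpleGraph V) (k : ℕ) : Prop :=
  ∀ L : V → Finset ℕ, (∀ v, k ≤ (L v).card) →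
    ∀ M : MatchingAssignment G L, HasMLColoring M

/-- `φ0` is a pre-colouring of the cycle `C`: it picks a colour from the list of each
vertex of `C`, and the chosen pairs form an independent set in the cover graph. -/
def IsPrecoloring {G : SimpleGraph V} {L : V → Finset ℕ} (M : MatchingAssignment G L)
    {a : V} (C : G.Walk a a) (φ0 : V → ℕ) : Prop :=
  (∀ v ∈ C.support, φ0 v ∈ L v) ∧
  ∀ u ∈ C.support, ∀ v ∈ C.support, ∀ h : G.Adj u v, ¬ M.rel h (φ0 u) (φ0 v)

/-- The pre-colouring `φ0` of the cycle `C` extends to an `M_L`-colouring of `G`. -/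
def ExtendsTo [Fintype V] {G : SimpleGraph V} {L : V → Finset ℕ}
    (M : MatchingAssignment G L) {a : V} (C : G.Walk a a) (φ0 : V → ℕ) : Prop :=
  ∃ s : Set {p : V × ℕ // p.2 ∈ L p.1},
    CoverIndep M s ∧ Nat.card s = Fintype.card V ∧
    ∀ v ∈ C.support, ∃ p ∈ s, (p : V × ℕ) = (v, φ0 v)

/-- `G` is `k`-choosable. -/
def Choosable (G : SimpleGraph V) (k : ℕ) : Prop :=
  ∀ L : V → Finset ℕ, (∀ v, k ≤ (L v).card) →
    ∃ c : V → ℕ, (∀ v, c v ∈ L v) ∧ ∀ ⦃u v : V⦄, G.Adj u v → c u ≠ c v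

/-- A counterexample to the extension statement for planar graphs with no 4-cycle
adjacent to a 5-cycle, on the vertex set `Fin n`. -/
def IsCex1 (n : ℕ) (G : SimpleGraph (Fin n)) : Prop :=
  IsPlanar G ∧ NoAdjCycles G 4 5 ∧
  ∃ (a : Fin n) (C : G.Walk a a) (L : Fin n → Finset ℕ)
      (M : MatchingAssignment G L) (φ0 : Fin n → ℕ),
    C.IsCycle ∧ C.length ≤ 7 ∧ (∀ v, 4 ≤ (L v).card) ∧
    IsPrecoloring M C φ0 ∧ ¬ ExtendsTo M C φ0

/-- A counterexample to the extension statement for planar graphs with no 4-cycle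
adjacent to a 6-cycle, on the vertex set `Fin n`. -/
def IsCex2 (n : ℕ) (G : SimpleGraph (Fin n)) : Prop :=
  IsPlanar G ∧ NoAdjCycles G 4 6 ∧
  ∃ (a : Fin n) (C : G.Walk a a) (L : Fin n → Finset ℕ)
      (M : MatchingAssignment G L) (φ0 : Fin n → ℕ),
    C.IsCycle ∧ IsGoodCycle G C ∧ C.length ≤ 8 ∧ (∀ v, 4 ≤ (L v).card) ∧
    IsPrecoloring M C φ0 ∧ ¬ ExtendsTo M C φ0

/-- The graph obtained from `G - {v, v2, v4}` by identifying `v1` and `v3`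
(the merged vertex is `v1`; the vertices `v, v2, v4, v3` become isolated). -/
def identGraph (G : SimpleGraph V) (v v2 v4 v1 v3 : V) : SimpleGraph V :=
  SimpleGraph.fromRel fun x y =>
    x ∉ ({v, v2, v4} : Set V) ∧ y ∉ ({v, v2, v4} : Set V) ∧ x ≠ v3 ∧ y ≠ v3 ∧
      (G.Adj x y ∨ (x = v1 ∧ G.Adj v3 y) ∨ (y = v1 ∧ G.Adj x v3))


section CycleAux
variable {V : Type u}

lemma isCycle4' {G : SimpleGraph V} {v a b c : V}
    (h1 : G.Adj v a) (h2 : G.Adj a b) (h3 : G.Adj b c) (h4 : G.Adj c v)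
    (hab : a ≠ b) (hac : a ≠ c) (hbc : b ≠ c)
    (hva : v ≠ a) (hvb : v ≠ b) (hvc : v ≠ c) :
    (SimpleGraph.Walk.cons h1 (SimpleGraph.Walk.cons h2
      (SimpleGraph.Walk.cons h3 (SimpleGraph.Walk.cons h4 SimpleGraph.Walk.nil)))).IsCycle := by
  rw [SimpleGraph.Walk.isCycle_def, SimpleGraph.Walk.isTrail_def]
  refine ⟨?_, by simp, ?_⟩
  · simp [Sym2.eq_iff]
    aesop
  · simp
    aesop

lemma isCycle6' {G : SimpleGraph V} {v a b c d e : V}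
    (h1 : G.Adj v a) (h2 : G.Adj a b) (h3 : G.Adj b c) (h4 : G.Adj c d)
    (h5 : G.Adj d e) (h6 : G.Adj e v)
    (hab : a ≠ b) (hac : a ≠ c) (had : a ≠ d) (hae : a ≠ e)
    (hbc : b ≠ c) (hbd : b ≠ d) (hbe : b ≠ e)
    (hcd : c ≠ d) (hce : c ≠ e) (hde : d ≠ e)
    (hva : v ≠ a) (hvb : v ≠ b) (hvc : v ≠ c) (hvd : v ≠ d) (hve : v ≠ e) :
    (SimpleGraph.Walk.cons h1 (SimpleGraph.Walk.cons h2 (SimpleGraph.Walk.cons h3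
      (SimpleGraph.Walk.cons h4 (SimpleGraph.Walk.cons h5
        (SimpleGraph.Walk.cons h6 SimpleGraph.Walk.nil)))))).IsCycle := by
  rw [SimpleGraph.Walk.isCycle_def, SimpleGraph.Walk.isTrail_def]
  refine ⟨?_, by simp, ?_⟩
  · simp [Sym2.eq_iff]
    aesop
  · simp
    aesop
end CycleAux
section AuxProofs

variable {V : Type u} [Fintype V] {G : SimpleGraph V}

omit [Fintype V] in
lemma facePerm_apply' (rot : Equiv.Perm G.Dart) (d : G.Dart) :
    facePerm rot d = rot d.symm := rfl

namespace PlaneEmbedding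

variable (E : PlaneEmbedding G)

lemma rot_inv_fst (d : G.Dart) : (E.rot⁻¹ d).fst = d.fst := by
  conv_rhs => rw [← (show E.rot (E.rot⁻¹ d) = d from E.rot.apply_symm_apply d)]
  rw [E.rot_fst]

lemma rot_pow_fst (n : ℕ) (d : G.Dart) : ((E.rot ^ n) d).fst = d.fst := by
  induction n generalizing d with
  | zero => rfl
  | succ n ih => rw [pow_succ, Equiv.Perm.mul_apply, ih, E.rot_fst]

lemma gdeg_eq_degree [DecidableRel G.Adj] (v : V) : gdeg G v = G.degree v := by
  rw [gdeg, Nat.card_eq_fintype_card, SimpleGraph.card_neighborSet_eq_degree]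

/-- Lemma A: powers of `rot` up to 4 move any dart at a vertex of degree ≥ 5. -/
lemma rot_pow_ne {v : V} (hv : 5 ≤ gdeg G v) {d : G.Dart} (hd : d.fst = v)
    {i : ℕ} (h0 : 0 < i) (h4 : i ≤ 4) : (E.rot ^ i) d ≠ d := by
  classical
  intro heq
  have hper : ∀ q : ℕ, ((E.rot ^ i) ^ q) d = d := by
    intro q
    induction q with
    | zero => rfl
    | succ q ih => rw [pow_succ, Equiv.Perm.mul_apply, heq, ih]
  have hmod : ∀ n : ℕ, (E.rot ^ n) d = (E.rot ^ (n % i)) d := by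
    intro n
    conv_lhs => rw [← Nat.mod_add_div n i]
    rw [pow_add, Equiv.Perm.mul_apply, pow_mul, hper]
  have hsub : (Finset.univ.filter (fun d' : G.Dart => d'.fst = v)) ⊆
      (Finset.range i).image (fun r => (E.rot ^ r) d) := by
    intro d' hd'
    simp only [Finset.mem_filter, Finset.mem_univ, true_and] at hd'
    obtain ⟨n, -, hn⟩ := (E.rot_cycle d d' (by rw [hd, hd'])).exists_pow_eq'
    exact Finset.mem_image.2 ⟨n % i, Finset.mem_range.2 (Nat.mod_lt _ h0),
      by rw [← hmod, hn]⟩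
  have hcard := Finset.card_le_card hsub
  have hbridge : Nat.card {d' : G.Dart // d'.fst = v}
      = (Finset.univ.filter (fun d' : G.Dart => d'.fst = v)).card := by
    rw [Nat.card_eq_fintype_card, Fintype.card_subtype]
  have h5' : 5 ≤ Nat.card {d' : G.Dart // d'.fst = v} := by
    refine le_trans hv ?_
    rw [gdeg]
    exact Nat.card_le_card_of_injective
      (fun w : G.neighborSet v => (⟨G.dartOfNeighborSet v w, rfl⟩ : {d' : G.Dart // d'.fst = v}))
      (fun a b hab => G.dartOfNeighborSet_injective v (Subtype.ext_iff.mp hab))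
  have h5 : 5 ≤ (Finset.univ.filter (fun d' : G.Dart => d'.fst = v)).card := by
    rw [← hbridge]; exact h5'
  have himg : ((Finset.range i).image (fun r => (E.rot ^ r) d)).card ≤ i := by
    exact (Finset.card_image_le).trans (le_of_eq (Finset.card_range i))
  omega

/-- Lemma B: if the face of a dart `d` is a triangle, then the head of `d` and the
head of the previous dart in the rotation at `d.fst` are adjacent. -/
lemma adj_of_face3 {d : G.Dart} (h3 : E.faceLength d = 3) :
    G.Adj d.snd (E.rot⁻¹ d).snd := by
  have hper : (⇑(facePerm E.rot))^[3] d = d := by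
    rw [← h3]; exact Function.iterate_minimalPeriod
  have h : facePerm E.rot (facePerm E.rot (facePerm E.rot d)) = d := hper
  have h' : E.rot ((facePerm E.rot (facePerm E.rot d)).symm) = d := h
  have hinv : (facePerm E.rot (facePerm E.rot d)).symm = E.rot⁻¹ d := by
    have h2 := congrArg (⇑E.rot⁻¹) h'
    simpa using h2
  rw [← hinv]
  have h1 : (facePerm E.rot (facePerm E.rot d)).symm.snd
      = (facePerm E.rot (facePerm E.rot d)).fst := rfl
  have h2 : (facePerm E.rot (facePerm E.rot d)).fst = (facePerm E.rot d).snd := by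
    rw [facePerm_apply', E.rot_fst]
    rfl
  rw [h1, h2]
  have h3' : (facePerm E.rot d).fst = d.snd := by
    rw [facePerm_apply', E.rot_fst]
    rfl
  have := (facePerm E.rot d).adj
  rwa [h3'] at this

end PlaneEmbedding

end AuxProofs
namespace PlaneEmbedding
variable {V : Type u} [Fintype V] {G : SimpleGraph V} (E : PlaneEmbedding G)

lemma no_four_consecutive_triangles {v : V} (hv : 5 ≤ gdeg G v)
    (h46 : NoAdjCycles G 4 6) {d : G.Dart} (hd : d.fst = v)
    (t0 : E.faceLength d = 3) (t1 : E.faceLength (E.rot d) = 3)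
    (t2 : E.faceLength (E.rot (E.rot d)) = 3)
    (t3 : E.faceLength (E.rot (E.rot (E.rot d))) = 3) : False := by
  -- the five consecutive darts at v
  set c : ℕ → G.Dart := fun i => (E.rot ^ i) (E.rot⁻¹ d) with hc
  have hc0 : c 0 = E.rot⁻¹ d := by simp [hc]
  have hstep : ∀ i, c (i + 1) = E.rot (c i) := by
    intro i
    simp only [hc, pow_succ', Equiv.Perm.mul_apply]
  have hc1 : c 1 = d := by rw [hstep, hc0, show E.rot (E.rot⁻¹ d) = d from E.rot.apply_symm_apply d]
  have hc2 : c 2 = E.rot d := by rw [show (2:ℕ) = 1+1 from rfl, hstep, hc1]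
  have hc3 : c 3 = E.rot (E.rot d) := by rw [show (3:ℕ) = 2+1 from rfl, hstep, hc2]
  have hc4 : c 4 = E.rot (E.rot (E.rot d)) := by
    rw [show (4:ℕ) = 3+1 from rfl, hstep, hc3]
  have hcfst : ∀ i, (c i).fst = v := by
    intro i; simp only [hc]; rw [E.rot_pow_fst, E.rot_inv_fst, hd]
  -- the five darts are pairwise distinct
  have hdist : ∀ j k : ℕ, j < k → k ≤ 4 → c k ≠ c j := by
    intro j k hjk hk4 hEq
    apply E.rot_pow_ne hv (hcfst j) (i := k - j) (by omega) (by omega)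
    simp only [hc] at hEq ⊢
    rw [← Equiv.Perm.mul_apply, ← pow_add, show k - j + j = k from by omega]
    exact hEq
  -- the heads of the darts
  set w : ℕ → V := fun i => (c i).snd with hw
  have hwne : ∀ j k : ℕ, j < k → k ≤ 4 → w k ≠ w j := by
    intro j k hjk hk4 hEq
    exact hdist j k hjk hk4 (SimpleGraph.Dart.ext _ _ (Prod.ext (by rw [hcfst, hcfst]) hEq))
  have hadj : ∀ i, G.Adj v (w i) := by
    intro i
    have := (c i).adj
    rwa [hcfst] at this
  -- consecutive heads are adjacent (the triangular faces)
  have hinvstep : ∀ i, E.rot⁻¹ (c (i + 1)) = c i := by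
    intro i; rw [hstep, show E.rot⁻¹ (E.rot (c i)) = c i from E.rot.symm_apply_apply (c i)]
  have a01 : G.Adj (w 1) (w 0) := by
    have h := E.adj_of_face3 (d := c 1) (by rwa [hc1])
    rwa [hinvstep] at h
  have a12 : G.Adj (w 2) (w 1) := by
    have h := E.adj_of_face3 (d := c 2) (by rwa [hc2])
    rwa [hinvstep] at h
  have a23 : G.Adj (w 3) (w 2) := by
    have h := E.adj_of_face3 (d := c 3) (by rwa [hc3])
    rwa [hinvstep] at h
  have a34 : G.Adj (w 4) (w 3) := by
    have h := E.adj_of_face3 (d := c 4) (by rwa [hc4])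
    rwa [hinvstep] at h
  -- name the distinctness facts
  have n10 := hwne 0 1 (by omega) (by omega)
  have n20 := hwne 0 2 (by omega) (by omega)
  have n30 := hwne 0 3 (by omega) (by omega)
  have n40 := hwne 0 4 (by omega) (by omega)
  have n21 := hwne 1 2 (by omega) (by omega)
  have n31 := hwne 1 3 (by omega) (by omega)
  have n41 := hwne 1 4 (by omega) (by omega)
  have n32 := hwne 2 3 (by omega) (by omega)
  have n42 := hwne 2 4 (by omega) (by omega)
  have n43 := hwne 3 4 (by omega) (by omega)
  have m0 := (hadj 0).ne
  have m1 := (hadj 1).ne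
  have m2 := (hadj 2).ne
  have m3 := (hadj 3).ne
  have m4 := (hadj 4).ne
  -- the 4-cycle v w0 w1 w2 and the 6-cycle v w0 w1 w2 w3 w4
  have hC4 := isCycle4' (hadj 0) a01.symm a12.symm (hadj 2).symm
    n10.symm n20.symm n21.symm m0 m1 m2
  have hC6 := isCycle6' (hadj 0) a01.symm a12.symm a23.symm a34.symm (hadj 4).symm
    n10.symm n20.symm n30.symm n40.symm n21.symm n31.symm n41.symm n32.symm n42.symm n43.symm
    m0 m1 m2 m3 m4
  exact h46 v v _ _ hC4 hC6 (by simp) (by simp)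
    ⟨s(v, w 0), by simp, by simp⟩

end PlaneEmbedding
set_option maxHeartbeats 800000 in
/-- **Theorem (Statement 12).** In a plane graph with no 4-cycle adjacent to a 6-cycle,
every vertex of degree at least 5 is incident to at most `deg v - 2` faces of length 3. -/
theorem deg5_vertex_few_triangles_G2
    (V : Type) [Fintype V] (G : SimpleGraph V) (E : PlaneEmbedding G)
    (h46 : NoAdjCycles G 4 6) (v : V) (hv : 5 ≤ gdeg G v) :
    E.numTriFacesAt v ≤ gdeg G v - 2 := by
  classical
  have hstep1 : E.numTriFacesAt v ≤
      Nat.card {d : G.Dart // d.fst = v ∧ E.faceLength d = 3} := by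
    rw [PlaneEmbedding.numTriFacesAt]
    apply Nat.card_le_card_of_injective
      (fun f : {f : Quotient (sameCycleSetoid (facePerm E.rot)) //
          ∃ d : G.Dart, Quotient.mk (sameCycleSetoid (facePerm E.rot)) d = f ∧
            d.fst = v ∧ E.faceLength d = 3} =>
        (⟨f.2.choose, f.2.choose_spec.2⟩ : {d : G.Dart // d.fst = v ∧ E.faceLength d = 3}))
    intro f1 f2 h
    apply Subtype.ext
    rw [← f1.2.choose_spec.1, ← f2.2.choose_spec.1]
    exact congrArg _ (Subtype.ext_iff.mp h)
  refine le_trans hstep1 ?_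
  by_contra hlt
  push_neg at hlt
  set T : Finset G.Dart :=
    Finset.univ.filter (fun d : G.Dart => d.fst = v ∧ E.faceLength d = 3) with hTdef
  set D : Finset G.Dart := Finset.univ.filter (fun d : G.Dart => d.fst = v) with hDdef
  have hT : Nat.card {d : G.Dart // d.fst = v ∧ E.faceLength d = 3} = T.card := by
    rw [Nat.card_eq_fintype_card, Fintype.card_subtype]
  have hDsub : Nat.card {d : G.Dart // d.fst = v} = D.card := by
    rw [Nat.card_eq_fintype_card, Fintype.card_subtype]
  have hequiv : Nat.card {d : G.Dart // d.fst = v} = gdeg G v := by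
    rw [gdeg]
    exact Nat.card_congr
      { toFun := fun d => ⟨d.1.snd, by have := d.1.adj; rwa [d.2] at this⟩
        invFun := fun w => ⟨G.dartOfNeighborSet v w, rfl⟩
        left_inv := fun d => Subtype.ext (SimpleGraph.Dart.ext _ _ (Prod.ext d.2.symm rfl))
        right_inv := fun w => rfl }
  have hDg : D.card = gdeg G v := by rw [← hDsub, hequiv]
  rw [hT] at hlt
  have hTD : T ⊆ D := by
    intro x hx
    simp only [hTdef, hDdef, Finset.mem_filter, Finset.mem_univ, true_and] at hx ⊢
    exact hx.1
  have hDT : (D \ T).card ≤ 1 := by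
    rw [Finset.card_sdiff_of_subset hTD]
    have := Finset.card_le_card hTD
    omega
  have hmemD : ∀ x : G.Dart, x ∈ D ↔ x.fst = v := by
    intro x; simp [hDdef]
  have hmemT : ∀ x : G.Dart, x ∈ T ↔ (x.fst = v ∧ E.faceLength x = 3) := by
    intro x; simp [hTdef]
  have hrun : ∃ d : G.Dart, d.fst = v ∧ d ∈ T ∧ E.rot d ∈ T ∧
      E.rot (E.rot d) ∈ T ∧ E.rot (E.rot (E.rot d)) ∈ T := by
    rcases Finset.eq_empty_or_nonempty (D \ T) with hemp | ⟨m, hm⟩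
    · have hsub : D ⊆ T := by
        intro x hx
        by_contra hxT
        exact (Finset.notMem_empty x) (hemp ▸ Finset.mem_sdiff.2 ⟨hx, hxT⟩)
      have hDne : D.Nonempty := Finset.card_pos.1 (by omega)
      obtain ⟨d, hdD⟩ := hDne
      have hdv := (hmemD d).1 hdD
      refine ⟨d, hdv, hsub hdD, ?_, ?_, ?_⟩ <;>
        refine hsub ((hmemD _).2 ?_) <;>
        simp only [E.rot_fst] <;> exact hdv
    · have hmv : m.fst = v := (hmemD m).1 (Finset.mem_sdiff.1 hm).1
      have hin : ∀ x : G.Dart, x.fst = v → x ≠ m → x ∈ T := by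
        intro x hx hxm
        by_contra hxT
        exact hxm (Finset.card_le_one.1 hDT x
          (Finset.mem_sdiff.2 ⟨(hmemD x).2 hx, hxT⟩) m hm)
      have p1 : E.rot m = (E.rot ^ 1) m := by rw [pow_one]
      have p2 : E.rot (E.rot m) = (E.rot ^ 2) m := by
        rw [show (2:ℕ) = 1+1 from rfl, pow_succ', Equiv.Perm.mul_apply, pow_one]
      have p3 : E.rot (E.rot (E.rot m)) = (E.rot ^ 3) m := by
        rw [show (3:ℕ) = 2+1 from rfl, pow_succ', Equiv.Perm.mul_apply, ← p2]
      have p4 : E.rot (E.rot (E.rot (E.rot m))) = (E.rot ^ 4) m := by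
        rw [show (4:ℕ) = 3+1 from rfl, pow_succ', Equiv.Perm.mul_apply, ← p3]
      have f1 : (E.rot m).fst = v := by rw [E.rot_fst, hmv]
      have f2 : (E.rot (E.rot m)).fst = v := by rw [E.rot_fst, f1]
      have f3 : (E.rot (E.rot (E.rot m))).fst = v := by rw [E.rot_fst, f2]
      have f4 : (E.rot (E.rot (E.rot (E.rot m)))).fst = v := by rw [E.rot_fst, f3]
      refine ⟨E.rot m, f1, ?_, ?_, ?_, ?_⟩
      · exact hin _ f1 (by rw [p1]; exact E.rot_pow_ne hv hmv (by omega) (by omega))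
      · exact hin _ f2 (by rw [p2]; exact E.rot_pow_ne hv hmv (by omega) (by omega))
      · exact hin _ f3 (by rw [p3]; exact E.rot_pow_ne hv hmv (by omega) (by omega))
      · exact hin _ f4 (by rw [p4]; exact E.rot_pow_ne hv hmv (by omega) (by omega))
  obtain ⟨d, hdv, h0, h1, h2, h3⟩ := hrun
  exact E.no_four_consecutive_triangles hv h46 hdv
    ((hmemT _).1 h0).2 ((hmemT _).1 h1).2 ((hmemT _).1 h2).2 ((hmemT _).1 h3).2
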